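/- Let U ⊆ ℝ_{≥0} satisfy: (1) U is closed under multiplication and addition by non-negative rationals; (2) U is closed under addition; (3) there exist rationals a ≥ 0, q > 0 and d ∈ ℕ, d ≥ 1 such that for every strictly increasing sequence 0 ≤ n₁ < n₂ < … of natural numbers, a + q·Σ_{k=1}^∞ 2^k·2^{-d·n_k} ∈ U. Then U = ℝ_{≥0}. -/

import Mathlib

open Finset

lemma digit_lemma (ρ : ℝ) (hρ0 : 0 < ρ) (hρ1 : ρ < 1) (T : ℕ)
    (hT : 1 - ρ ≤ T * ρ) (W : ℝ) (hW0 : 0 ≤ W) (hW1 : W ≤ T / (1 - ρ)) :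
    ∃ e : ℕ → ℕ, (∀ k, e k ≤ T) ∧ ∑' k, (e k : ℝ) * ρ ^ k = W := by
  classical
  have h1ρ : 0 < 1 - ρ := by linarith
  set C : ℝ := T / (1 - ρ) with hC
  have hρC : ρ * C = C - T := by
    have h : C * (1 - ρ) = T := by rw [hC]; exact div_mul_cancel₀ _ h1ρ.ne'
    linear_combination -h
  let E : ℝ → ℕ := fun w => min T ⌊w⌋₊
  let Wn : ℕ → ℝ := fun k => Nat.rec W (fun _ w => (w - E w) / ρ) k
  have hWS : ∀ k, Wn (k+1) = (Wn k - E (Wn k)) / ρ := fun _ => rfl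
  have step : ∀ w : ℝ, 0 ≤ w → w ≤ C → (E w : ℝ) ≤ w ∧ w - E w ≤ ρ * C := by
    intro w hw0 hwC
    constructor
    · calc (E w : ℝ) ≤ (⌊w⌋₊ : ℝ) := by exact_mod_cast min_le_right T ⌊w⌋₊
        _ ≤ w := Nat.floor_le hw0
    · by_cases h : ⌊w⌋₊ ≤ T
      · have hE : E w = ⌊w⌋₊ := min_eq_right h
        have h2 : w - ⌊w⌋₊ < 1 := by
          have := Nat.lt_floor_add_one w; linarith
        have h1 : (1:ℝ) ≤ ρ * C := by
          rw [hC, ← mul_div_assoc, le_div_iff₀ h1ρ]; linarith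
        rw [hE]; linarith
      · have hE : E w = T := min_eq_left (le_of_not_ge h)
        rw [hE]; linarith
  have inv : ∀ k, 0 ≤ Wn k ∧ Wn k ≤ C := by
    intro k
    induction k with
    | zero => exact ⟨hW0, hW1⟩
    | succ k ih =>
      obtain ⟨h0, hc⟩ := ih
      obtain ⟨hl, hu⟩ := step _ h0 hc
      rw [hWS]
      constructor
      · exact div_nonneg (by linarith) hρ0.le
      · rw [div_le_iff₀ hρ0]; linarith [mul_comm ρ C]
  set e : ℕ → ℕ := fun k => E (Wn k) with he
  have hbd : ∀ k, e k ≤ T := fun k => min_le_left _ _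
  have iden : ∀ K, ∑ k ∈ range K, (e k : ℝ) * ρ ^ k = W - ρ ^ K * Wn K := by
    intro K
    induction K with
    | zero => simp [show Wn 0 = W from rfl]
    | succ K ih =>
      rw [sum_range_succ, ih, hWS, pow_succ]
      have : ρ ≠ 0 := hρ0.ne'
      field_simp
      ring
  have hsummable : Summable (fun k => (e k : ℝ) * ρ ^ k) := by
    apply Summable.of_nonneg_of_le (fun k => by positivity)
      (fun k => mul_le_mul_of_nonneg_right (show (e k : ℝ) ≤ (T:ℝ) by exact_mod_cast hbd k)
        (pow_nonneg hρ0.le k))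
    exact (summable_geometric_of_lt_one hρ0.le hρ1).mul_left _
  have htends : Filter.Tendsto (fun K => ∑ k ∈ range K, (e k : ℝ) * ρ ^ k)
      Filter.atTop (nhds W) := by
    simp only [iden]
    have h0 : Filter.Tendsto (fun K : ℕ => ρ ^ K * Wn K) Filter.atTop (nhds 0) := by
      apply squeeze_zero (fun K => mul_nonneg (pow_nonneg hρ0.le K) (inv K).1)
        (fun K => mul_le_mul_of_nonneg_left (inv K).2 (pow_nonneg hρ0.le K))
      have := (tendsto_pow_atTop_nhds_zero_of_lt_one hρ0.le hρ1).mul_const C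
      simpa using this
    have := Filter.Tendsto.const_sub W h0
    simpa using this
  exact ⟨e, hbd, tendsto_nhds_unique hsummable.hasSum.tendsto_sum_nat htends⟩

/-- Proposition about sets closed under the given operations: a set
`U ⊆ ℝ_{≥0}` closed under multiplication and addition by non-negative rationals, closed
under addition, and containing all numbers `a + q·Σ_{k≥1} 2^k 2^{-d·n_k}` for every strictly
increasing sequence `(n_k)`, must be all of `ℝ_{≥0}`. -/
theorem stmt_9 (U : Set ℝ)
    (hU : U ⊆ Set.Ici (0 : ℝ))
    (h1 : ∀ r ∈ U, ∀ c : ℚ, 0 ≤ c → ((c : ℝ) * r ∈ U ∧ (c : ℝ) + r ∈ U))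
    (h2 : ∀ r ∈ U, ∀ s ∈ U, r + s ∈ U)
    (h3 : ∃ (a q : ℚ) (d : ℕ), 0 ≤ a ∧ 0 < q ∧ 1 ≤ d ∧
      ∀ n : ℕ → ℕ, StrictMono n →
        (a : ℝ) + (q : ℝ) *
          ∑' k : ℕ, (2 : ℝ) ^ (k + 1) * (2 : ℝ) ^ (-((d : ℤ) * (n k : ℤ))) ∈ U) :
    U = Set.Ici 0 := by
  classical
  obtain ⟨a, q, d, ha, hq, hd, h3⟩ := h3
  have haR : (0:ℝ) ≤ (a:ℝ) := by exact_mod_cast ha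
  have hqR : (0:ℝ) < (q:ℝ) := by exact_mod_cast hq
  set c2 : ℝ := ((2:ℝ)^d)⁻¹ with hc2def
  have h2d : (2:ℝ) ≤ (2:ℝ)^d := by
    calc (2:ℝ) = 2^1 := (pow_one 2).symm
    _ ≤ 2^d := pow_le_pow_right₀ one_le_two hd
  have hc2pos : 0 < c2 := by positivity
  have hc2le : c2 ≤ 1/2 := by
    rw [hc2def, show (1:ℝ)/2 = 2⁻¹ by norm_num]
    exact inv_anti₀ two_pos h2d
  set ρ : ℝ := 2 * c2^2 with hρdef
  have hρ0 : 0 < ρ := by positivity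
  have hρ1 : ρ < 1 := by nlinarith
  set T : ℕ := 4^d with hTdef
  have hTR : (T:ℝ) = ((2:ℝ)^d)^2 := by
    rw [hTdef]
    push_cast
    rw [← pow_mul, mul_comm d 2, pow_mul]
    norm_num
  have hTρ : (T:ℝ) * ρ = 2 := by
    rw [hTR, hρdef, hc2def]
    have h2dne : ((2:ℝ)^d) ≠ 0 := by positivity
    field_simp
  have hTpos : (0:ℝ) < T := by rw [hTR]; positivity
  have h1ρ : 0 < 1 - ρ := by linarith
  have h0U : (0:ℝ) ∈ U := by
    have hu0 := h3 id strictMono_id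
    have := (h1 _ hu0 0 le_rfl).1
    simpa using this
  apply le_antisymm hU
  intro x hx
  rcases eq_or_lt_of_le (Set.mem_Ici.mp hx) with hx0 | hx0
  · rwa [← hx0]
  -- main case x > 0
  set κ : ℝ := T*a + 2*q*((T:ℝ)/(1-ρ)) with hκdef
  have hκpos : 0 < κ := by
    have ha1 : 0 ≤ (T:ℝ)*a := by positivity
    have ha2 : 0 < 2*(q:ℝ)*((T:ℝ)/(1-ρ)) := by positivity
    rw [hκdef]; linarith
  obtain ⟨s, hs0, hs1⟩ := exists_rat_btwn (show (0:ℝ) < x/κ from div_pos hx0 hκpos)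
  have hs0' : (0:ℝ) < (s:ℝ) := hs0
  have hs0ℚ : (0:ℚ) ≤ s := by exact_mod_cast hs0'.le
  have hsκ : (s:ℝ)*κ < x := (lt_div_iff₀ hκpos).mp hs1
  set lam : ℝ := 2*(s:ℝ)*q*(1-c2) with hlamdef
  have hlam : 0 < lam := by
    have hc2' : (0:ℝ) < 1 - c2 := by linarith
    rw [hlamdef]; positivity
  obtain ⟨c', hc'1, hc'2⟩ := exists_rat_btwn
    (show x - (s:ℝ)*κ < x - (s:ℝ)*κ + lam*((T:ℝ)/(1-ρ)) from by
      have : 0 < lam*((T:ℝ)/(1-ρ)) := by positivity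
      linarith)
  have hc'0 : (0:ℚ) ≤ c' := by
    have : (0:ℝ) ≤ (c':ℝ) := by linarith
    exact_mod_cast this
  set W : ℝ := ((s:ℝ)*κ + c' - x)/lam with hWdef
  have hW0 : 0 ≤ W := by
    apply div_nonneg _ hlam.le
    linarith
  have hW1 : W ≤ (T:ℝ)/(1-ρ) := by
    rw [hWdef, div_le_iff₀ hlam]
    linarith [mul_comm lam ((T:ℝ)/(1-ρ)), hc'2]
  obtain ⟨e, hbd, hsum⟩ := digit_lemma ρ hρ0 hρ1 T (by rw [hTρ]; linarith) W hW0 hW1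
  clear_value c2 ρ T κ lam W
  set n : ℕ → ℕ → ℕ := fun t k => 2*k + (if t < e k then 1 else 0) with hndef
  have hmono : ∀ t, StrictMono (n t) := by
    intro t
    apply strictMono_nat_of_lt_succ
    intro k
    simp only [hndef]
    split_ifs <;> omega
  have key : ∀ (k j : ℕ), (2 : ℝ) ^ (k + 1) * (2 : ℝ) ^ (-((d : ℤ) * ((2*k + j : ℕ) : ℤ))) =
      2 * ρ ^ k * c2 ^ j := by
    intro k j
    have h2ne : (2:ℝ) ≠ 0 := two_ne_zero
    have hcast : (-((d : ℤ) * ((2*k + j : ℕ) : ℤ))) = -((d*(2*k+j) : ℕ) : ℤ) := by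
      push_cast; ring
    rw [hcast, zpow_neg, zpow_natCast, hρdef, hc2def]
    rw [inv_pow, ← pow_mul, mul_pow, inv_pow, ← pow_mul, inv_pow, ← pow_mul]
    rw [show d*(2*k+j) = d*2*k + d*j by ring, pow_add]
    field_simp
    ring
  set V : ℕ → ℝ := fun t => ∑' k : ℕ, (2 : ℝ) ^ (k + 1) *
      (2 : ℝ) ^ (-((d : ℤ) * ((n t k : ℕ) : ℤ))) with hVdef
  have hVt : ∀ t, V t = ∑' k : ℕ, 2 * ρ^k * c2 ^ (if t < e k then 1 else 0) := by
    intro t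
    apply tsum_congr
    intro k
    exact key k _
  have hgsummable : ∀ t, Summable (fun k => 2 * ρ^k * c2 ^ (if t < e k then 1 else 0)) := by
    intro t
    have hle : ∀ k, 2 * ρ^k * c2 ^ (if t < e k then 1 else 0) ≤ 2 * ρ^k := by
      intro k
      have hle1 : c2 ^ (if t < e k then 1 else 0) ≤ 1 :=
        pow_le_one₀ hc2pos.le (by linarith)
      have h0 : (0:ℝ) ≤ 2 * ρ^k := by positivity
      nlinarith
    exact Summable.of_nonneg_of_le (fun k => by positivity) hle
      ((summable_geometric_of_lt_one hρ0.le hρ1).mul_left 2)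
  have htrack : ∀ t, (s:ℝ) * ((a:ℝ) + q * V t) ∈ U := by
    intro t
    exact (h1 _ (h3 (n t) (hmono t)) s hs0ℚ).1
  have sumU : ∀ (m : ℕ) (f : ℕ → ℝ), (∀ t, f t ∈ U) → ∑ t ∈ range (m+1), f t ∈ U := by
    intro m
    induction m with
    | zero => intro f hf; simpa using hf 0
    | succ m ih =>
      intro f hf
      rw [sum_range_succ]
      exact h2 _ (ih f hf) _ (hf _)
  have hT1 : T = (T - 1) + 1 := by
    have : 0 < T := by rw [hTdef]; positivity
    omega
  have hsumU : ∑ t ∈ range T, (s:ℝ) * ((a:ℝ) + q * V t) ∈ U := by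
    rw [hT1]
    exact sumU _ _ htrack
  have hinner : ∀ k, ∑ t ∈ range T, 2 * ρ^k * c2 ^ (if t < e k then 1 else 0) =
      2*(T:ℝ)*ρ^k - 2*(1-c2) * ((e k : ℝ) * ρ^k) := by
    intro k
    rw [← Finset.mul_sum]
    have hsplit : ∑ t ∈ range T, c2 ^ (if t < e k then 1 else 0) =
        (e k : ℝ) * c2 + ((T:ℝ) - (e k : ℝ)) := by
      rw [range_eq_Ico, ← Finset.sum_Ico_consecutive _ (Nat.zero_le (e k)) (hbd k)]
      have hone : ∀ t ∈ Finset.Ico 0 (e k), c2 ^ (if t < e k then 1 else 0) = c2 := by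
        intro t ht
        rw [if_pos (Finset.mem_Ico.mp ht).2, pow_one]
      have htwo : ∀ t ∈ Finset.Ico (e k) T, c2 ^ (if t < e k then 1 else 0) = 1 := by
        intro t ht
        rw [if_neg (not_lt.mpr (Finset.mem_Ico.mp ht).1), pow_zero]
      rw [Finset.sum_congr rfl hone, Finset.sum_congr rfl htwo,
        Finset.sum_const, Finset.sum_const, Nat.card_Ico, Nat.card_Ico,
        Nat.sub_zero, nsmul_eq_mul, nsmul_eq_mul, Nat.cast_sub (hbd k)]
      ring
    rw [hsplit]
    ring
  have hVsum : ∑ t ∈ range T, V t = 2*(T:ℝ)/(1-ρ) - 2*(1-c2)*W := by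
    have hswap : ∑ t ∈ range T, V t =
        ∑' k : ℕ, ∑ t ∈ range T, 2 * ρ^k * c2 ^ (if t < e k then 1 else 0) := by
      rw [Finset.sum_congr rfl (fun t _ => hVt t)]
      exact (Summable.tsum_finsetSum (fun t _ => hgsummable t)).symm
    rw [hswap, tsum_congr hinner]
    have hA : Summable (fun k : ℕ => 2*(T:ℝ)*ρ^k) :=
      (summable_geometric_of_lt_one hρ0.le hρ1).mul_left _
    have hB : Summable (fun k : ℕ => (e k : ℝ) * ρ^k) := by
      apply Summable.of_nonneg_of_le (fun k => by positivity)
        (fun k => mul_le_mul_of_nonneg_right (show (e k : ℝ) ≤ (T:ℝ) by exact_mod_cast hbd k)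
          (pow_nonneg hρ0.le k))
      exact (summable_geometric_of_lt_one hρ0.le hρ1).mul_left _
    rw [Summable.tsum_sub hA (hB.mul_left _)]
    rw [tsum_mul_left, tsum_mul_left, tsum_geometric_of_lt_one hρ0.le hρ1, hsum]
    rw [div_eq_mul_inv]
  have hWlam : lam * W = (s:ℝ)*κ + (c':ℝ) - x := by
    rw [hWdef]
    field_simp
  have hfinal : ∑ t ∈ range T, (s:ℝ) * ((a:ℝ) + q * V t) = x - c' := by
    have expand : ∀ t ∈ range T, (s:ℝ) * ((a:ℝ) + q * V t) =
        (s:ℝ)*(a:ℝ) + (s:ℝ)*(q:ℝ) * V t := fun t _ => by ring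
    rw [Finset.sum_congr rfl expand, Finset.sum_add_distrib, Finset.sum_const,
      ← Finset.mul_sum, hVsum, Finset.card_range, nsmul_eq_mul]
    have hexp : (T:ℝ)*((s:ℝ)*(a:ℝ)) + (s:ℝ)*(q:ℝ)*(2*(T:ℝ)/(1-ρ) - 2*(1-c2)*W) =
        (s:ℝ)*κ - lam*W := by
      rw [hκdef, hlamdef]
      ring
    linarith [hWlam, hexp]
  have hxmem := (h1 _ hsumU c' hc'0).2
  rw [hfinal] at hxmem
  have hxeq : (c':ℝ) + (x - (c':ℝ)) = x := by ring
  rwa [hxeq] at hxmem
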